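/- Let Ω be a finite set, let μ be a q-measure on P(Ω), and let α : Ω × Ω → ℝ be the unique symmetric function with μ(A) = Σ_{x ∈ A} Σ_{y ∈ A} α(x, y) for all A ⊆ Ω. Then for every function f : Ω → ℝ with f ≥ 0, the q-integral of f satisfies ∫ f dμ := ∫₀^∞ μ({ω ∈ Ω : f(ω) > t}) dt = Σ_{x ∈ Ω} Σ_{y ∈ Ω} min(f(x), f(y)) α(x, y), where the left-hand integral is the Lebesgue integral over (0, ∞) of the real-valued function t ↦ μ({ω : f(ω) > t}). -/

import Mathlib

open MeasureTheory

def Grade2Additive {Ω : Type*} [DecidableEq Ω] (μ : Finset Ω → ℝ) : Prop :=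
  ∀ A B C : Finset Ω, Disjoint A B → Disjoint A C → Disjoint B C →
    μ (A ∪ B ∪ C) = μ (A ∪ B) + μ (A ∪ C) + μ (B ∪ C) - μ A - μ B - μ C

theorem qIntegral_eq_double_sum_min {Ω : Type*} [Fintype Ω] [DecidableEq Ω]
    (μ : Finset Ω → ℝ) (hμ : Grade2Additive μ) (hpos : ∀ A, 0 ≤ μ A)
    (α : Ω → Ω → ℝ) (hsym : ∀ x y, α x y = α y x)
    (hrep : ∀ A : Finset Ω, μ A = ∑ x ∈ A, ∑ y ∈ A, α x y)
    (f : Ω → ℝ) (hf : ∀ ω, 0 ≤ f ω) :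
    (∫ t in Set.Ioi (0 : ℝ), μ (Finset.univ.filter fun ω => t < f ω)) =
      ∑ x, ∑ y, min (f x) (f y) * α x y := by
  have key : Set.EqOn (fun t => μ (Finset.univ.filter fun ω => t < f ω))
      (fun t => ∑ x, ∑ y, (Set.Ioo 0 (min (f x) (f y))).indicator (fun _ => α x y) t)
      (Set.Ioi (0 : ℝ)) := by
    intro t ht
    simp only [Set.mem_Ioi] at ht
    simp only [hrep, Finset.sum_filter]
    refine Finset.sum_congr rfl fun x _ => ?_
    by_cases hx : t < f x
    · simp only [if_pos hx]
      refine Finset.sum_congr rfl fun y _ => ?_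
      by_cases hy : t < f y <;>
        simp [hx, hy, ht, lt_min_iff, Set.indicator_apply, Set.mem_Ioo]
    · simp only [if_neg hx]
      symm
      refine Finset.sum_eq_zero fun y _ => ?_
      simp only [Set.indicator_apply, Set.mem_Ioo, lt_min_iff]
      rw [if_neg]
      rintro ⟨-, h, -⟩
      exact hx h
  rw [setIntegral_congr_fun measurableSet_Ioi key]
  have hint : ∀ x y : Ω, Integrable
      ((Set.Ioo 0 (min (f x) (f y))).indicator (fun _ => α x y))
      (volume.restrict (Set.Ioi (0:ℝ))) := by
    intro x y
    rw [integrable_indicator_iff measurableSet_Ioo]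
    exact integrableOn_const (lt_of_le_of_lt (Measure.restrict_le_self _) measure_Ioo_lt_top).ne
  rw [integral_finset_sum _ fun x _ => integrable_finset_sum _ fun y _ => hint x y]
  refine Finset.sum_congr rfl fun x _ => ?_
  rw [integral_finset_sum _ fun y _ => hint x y]
  refine Finset.sum_congr rfl fun y _ => ?_
  rw [setIntegral_indicator measurableSet_Ioo]
  have h1 : Set.Ioi (0:ℝ) ∩ Set.Ioo 0 (min (f x) (f y)) = Set.Ioo 0 (min (f x) (f y)) := by
    ext t; simp only [Set.mem_inter_iff, Set.mem_Ioi, Set.mem_Ioo]; tauto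
  rw [h1, setIntegral_const, Real.volume_real_Ioo, sub_zero,
    max_eq_left (le_min (hf x) (hf y)), smul_eq_mul]
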